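/- For every real number a₂ ≥ 1, every integer a₃ ≥ 1, every real s with 0 < s ≤ 1/2, and every natural number t, one has (⌊t/a₃⌋ + a₂)^{-2s} ≤ a₃ · (t + a₂)^{-2s}, where ⌊t/a₃⌋ denotes the integer part of t/a₃. -/
import Mathlib


/-- Estimate in the proof of Corollary 1 bounding the stepwise noise-intensity
coefficient: `(⌊t/a₃⌋ + a₂)^{-2s} ≤ a₃ · (t + a₂)^{-2s}`. -/
theorem stmt10 (a₂ : ℝ) (ha₂ : 1 ≤ a₂) (a₃ : ℕ) (ha₃ : 1 ≤ a₃)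
    (s : ℝ) (hs0 : 0 < s) (hs : s ≤ 1 / 2) (t : ℕ) :
    ((↑(t / a₃) : ℝ) + a₂) ^ (-(2 * s)) ≤ (a₃ : ℝ) * ((t : ℝ) + a₂) ^ (-(2 * s)) := by
  have ha3R : (1 : ℝ) ≤ (a₃ : ℝ) := by exact_mod_cast ha₃
  have ha3pos : (0 : ℝ) < (a₃ : ℝ) := lt_of_lt_of_le one_pos ha3R
  have hta : (0 : ℝ) < (t : ℝ) + a₂ := by positivity
  -- key: a₃ * (⌊t/a₃⌋ + a₂) ≥ t + a₂
  have hfloor : (t : ℝ) - (a₃ : ℝ) + 1 ≤ (a₃ : ℝ) * (↑(t / a₃) : ℝ) := by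
    have hmod := Nat.div_add_mod t a₃
    have hlt : t % a₃ < a₃ := Nat.mod_lt _ (by omega)
    have h2 : t + 1 ≤ a₃ * (t / a₃) + a₃ := by omega
    have : ((t : ℝ) + 1) ≤ (a₃ : ℝ) * (↑(t / a₃) : ℝ) + (a₃ : ℝ) := by exact_mod_cast h2
    linarith
  have hkey : (t : ℝ) + a₂ ≤ (a₃ : ℝ) * ((↑(t / a₃) : ℝ) + a₂) := by nlinarith
  have hx : (0 : ℝ) < (↑(t / a₃) : ℝ) + a₂ := by positivity
  have hy : (0 : ℝ) < ((t : ℝ) + a₂) / (a₃ : ℝ) := by positivity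
  have hyx : ((t : ℝ) + a₂) / (a₃ : ℝ) ≤ (↑(t / a₃) : ℝ) + a₂ :=
    (div_le_iff₀ ha3pos).mpr (by linarith [hkey, mul_comm (a₃:ℝ) ((↑(t / a₃) : ℝ) + a₂)])
  have h1 : ((↑(t / a₃) : ℝ) + a₂) ^ (-(2 * s)) ≤ (((t : ℝ) + a₂) / (a₃ : ℝ)) ^ (-(2 * s)) :=
    Real.rpow_le_rpow_of_nonpos hy hyx (by linarith)
  have h2 : (((t : ℝ) + a₂) / (a₃ : ℝ)) ^ (-(2 * s))
      = (a₃ : ℝ) ^ (2 * s) * ((t : ℝ) + a₂) ^ (-(2 * s)) := by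
    rw [Real.div_rpow hta.le ha3pos.le, Real.rpow_neg hta.le, Real.rpow_neg ha3pos.le,
      div_eq_mul_inv, inv_inv]
    ring
  have h3 : (a₃ : ℝ) ^ (2 * s) ≤ (a₃ : ℝ) := by
    calc (a₃ : ℝ) ^ (2 * s) ≤ (a₃ : ℝ) ^ (1 : ℝ) :=
          Real.rpow_le_rpow_of_exponent_le ha3R (by linarith)
      _ = (a₃ : ℝ) := Real.rpow_one _
  calc ((↑(t / a₃) : ℝ) + a₂) ^ (-(2 * s)) ≤ (a₃ : ℝ) ^ (2 * s) * ((t : ℝ) + a₂) ^ (-(2 * s)) := by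
        rw [← h2]; exact h1
    _ ≤ (a₃ : ℝ) * ((t : ℝ) + a₂) ^ (-(2 * s)) := by
        apply mul_le_mul_of_nonneg_right h3 (Real.rpow_nonneg hta.le _)
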